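/- For every α with 0 < α < 1, the quantity 1/2 + (1−α)/(4√2) + √((1−α)² + 4α²)/(4√2) is strictly greater than the maximum of the three numbers 1/2 + (1−α)/(2√2), 1/2 + (1/8)√(4+(1−α)²), and 1/2 + (1/4)√(1+α²); moreover at α = 0 and α = 1 the two quantities are equal. (That is, the optimal unsharp-measurement value P̄_succ^POVM(α) strictly exceeds the projective bound P̄_succ^PVM(α) for all α strictly between 0 and 1.) -/

import Mathlib

noncomputable section

/-- The optimal average success probability with unsharp measurements (Proposition 2). -/
def povmBound (α : ℝ) : ℝ :=
  1 / 2 + (1 - α) / (4 * Real.sqrt 2) + Real.sqrt ((1 - α) ^ 2 + 4 * α ^ 2) / (4 * Real.sqrt 2)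

/-- The bound for projective strategies (Proposition 1): the maximum of the bounds of
the unitary, mixed, and measure-and-prepare strategies. -/
def pvmBound (α : ℝ) : ℝ :=
  max (max (1 / 2 + (1 - α) / (2 * Real.sqrt 2)) (1 / 2 + Real.sqrt (4 + (1 - α) ^ 2) / 8))
    (1 / 2 + Real.sqrt (1 + α ^ 2) / 4)

lemma sq_lt_imp {x y : ℝ} (hx : 0 ≤ x) (hy : 0 ≤ y) (h : x ^ 2 < y ^ 2) : x < y := by
  nlinarith

lemma sq_le_imp {x y : ℝ} (hx : 0 ≤ x) (hy : 0 ≤ y) (h : x ^ 2 ≤ y ^ 2) : x ≤ y := by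
  nlinarith

set_option maxHeartbeats 2000000 in
lemma main_ineq (α : ℝ) (hα : 0 < α) (hα1 : α < 1) : pvmBound α < povmBound α := by
  have hr : (0:ℝ) < Real.sqrt 2 := Real.sqrt_pos.mpr (by norm_num)
  have hr2 : (Real.sqrt 2) ^ 2 = 2 := Real.sq_sqrt (by norm_num)
  set r := Real.sqrt 2 with hrdef
  set b := Real.sqrt ((1 - α) ^ 2 + 4 * α ^ 2) with hbdef
  have hb0 : 0 ≤ b := Real.sqrt_nonneg _
  have hb2 : b ^ 2 = (1 - α) ^ 2 + 4 * α ^ 2 := Real.sq_sqrt (by positivity)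
  set c := Real.sqrt (4 + (1 - α) ^ 2) with hcdef
  have hc0 : 0 ≤ c := Real.sqrt_nonneg _
  have hc2 : c ^ 2 = 4 + (1 - α) ^ 2 := Real.sq_sqrt (by positivity)
  set d := Real.sqrt (1 + α ^ 2) with hddef
  have hd0 : 0 ≤ d := Real.sqrt_nonneg _
  have hd2 : d ^ 2 = 1 + α ^ 2 := Real.sq_sqrt (by positivity)
  have hs : 0 < 1 - α := by linarith
  have hbpos : 0 < b := by nlinarith
  unfold pvmBound povmBound
  rw [← hrdef, ← hbdef, ← hcdef, ← hddef]
  have hcomb : (1 - α) / (4 * r) + b / (4 * r) = ((1 - α) + b) / (4 * r) := by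
    rw [← add_div]
  apply max_lt
  · apply max_lt
    · -- unitary bound
      have hb1 : 1 - α < b := sq_lt_imp (le_of_lt hs) hb0 (by nlinarith)
      have h : (1 - α) / (2 * r) < ((1 - α) + b) / (4 * r) := by
        rw [div_lt_div_iff₀ (by positivity) (by positivity)]
        nlinarith
      linarith [hcomb]
    · -- mixed bound
      have hrb : (1:ℝ) + α ≤ r * b := by
        apply sq_le_imp (by linarith) (by positivity)
        have e1 : (r * b) ^ 2 = 2 * ((1 - α) ^ 2 + 4 * α ^ 2) := by
          rw [mul_pow, hr2, hb2]
        nlinarith [sq_nonneg (1 - 3 * α)]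
      have hr142 : r < 3 / 2 := by nlinarith
      have kb : 8 * (1 - α) * b > 2 + 12 * α - 22 * α ^ 2 := by
        have p1 : 8 * (1 - α) * (r * b) ≥ 8 * (1 - α) * (1 + α) := by
          apply mul_le_mul_of_nonneg_left hrb (by linarith)
        have p2 : 8 * (1 - α) * b * (3 / 2) > 8 * (1 - α) * b * r := by
          have := mul_pos hs hbpos
          nlinarith
        nlinarith [p1, p2, sq_nonneg (25 * α - 9)]
      have hkey : r * c < 2 * ((1 - α) + b) := by
        apply sq_lt_imp (by positivity) (by linarith)
        have e1 : (r * c) ^ 2 = 2 * (4 + (1 - α) ^ 2) := by rw [mul_pow, hr2, hc2]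
        have e2 : (2 * ((1 - α) + b)) ^ 2 = 4 * (1 - α) ^ 2 + 8 * (1 - α) * b + 4 * b ^ 2 := by
          ring
        rw [e1, e2, hb2]
        nlinarith [kb]
      have h : c / 8 < ((1 - α) + b) / (4 * r) := by
        rw [div_lt_div_iff₀ (by positivity) (by positivity)]
        nlinarith
      linarith [hcomb]
  · -- measure-and-prepare bound
    have hb2a : 2 * α < b := sq_lt_imp (by linarith) hb0 (by nlinarith)
    have hkey : r * d < (1 - α) + b := by
      apply sq_lt_imp (by positivity) (by linarith)
      have e1 : (r * d) ^ 2 = 2 * (1 + α ^ 2) := by rw [mul_pow, hr2, hd2]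
      have e2 : ((1 - α) + b) ^ 2 = (1 - α) ^ 2 + 2 * (1 - α) * b + b ^ 2 := by ring
      rw [e1, e2, hb2]
      nlinarith [mul_lt_mul_of_pos_left hb2a hs]
    have h : d / 4 < ((1 - α) + b) / (4 * r) := by
      rw [div_lt_div_iff₀ (by positivity) (by positivity)]
      nlinarith
    linarith [hcomb]

/-- For every `0 < α < 1` the unsharp-measurement value strictly exceeds the projective
bound, while at `α = 0` and `α = 1` the two quantities coincide. -/
theorem povm_strictly_beats_pvm :
    (∀ α : ℝ, 0 < α → α < 1 → pvmBound α < povmBound α) ∧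
      povmBound 0 = pvmBound 0 ∧ povmBound 1 = pvmBound 1 := by
  have hr : (0:ℝ) < Real.sqrt 2 := Real.sqrt_pos.mpr (by norm_num)
  have hr2 : (Real.sqrt 2) ^ 2 = 2 := Real.sq_sqrt (by norm_num)
  refine ⟨fun α h1 h2 => main_ineq α h1 h2, ?_, ?_⟩
  · have h5 : (0:ℝ) ≤ Real.sqrt 5 := Real.sqrt_nonneg _
    have h52 : (Real.sqrt 5) ^ 2 = 5 := Real.sq_sqrt (by norm_num)
    have e1 : Real.sqrt ((1 - 0) ^ 2 + 4 * 0 ^ 2) = 1 := by norm_num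
    have e2 : Real.sqrt (4 + (1 - 0) ^ 2) = Real.sqrt 5 := by norm_num
    have e3 : Real.sqrt (1 + (0:ℝ) ^ 2) = 1 := by norm_num
    unfold povmBound pvmBound
    rw [e1, e2, e3]
    have m1 : 1 / 2 + Real.sqrt 5 / 8 ≤ 1 / 2 + (1 - 0) / (2 * Real.sqrt 2) := by
      have : Real.sqrt 5 / 8 ≤ 1 / (2 * Real.sqrt 2) := by
        rw [div_le_div_iff₀ (by norm_num) (by positivity)]
        nlinarith [sq_le_imp h5 (by positivity : (0:ℝ) ≤ 2 * Real.sqrt 2) (by nlinarith)]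
      linarith
    have m2 : 1 / 2 + (1:ℝ) / 4 ≤ 1 / 2 + (1 - 0) / (2 * Real.sqrt 2) := by
      have hrle : Real.sqrt 2 ≤ 2 := sq_le_imp (le_of_lt hr) (by norm_num) (by nlinarith)
      have : (1:ℝ) / 4 ≤ 1 / (2 * Real.sqrt 2) := by
        rw [div_le_div_iff₀ (by norm_num) (by positivity)]
        nlinarith
      linarith
    rw [max_eq_left m1, max_eq_left (by simpa using m2)]
    have hne : Real.sqrt 2 ≠ 0 := ne_of_gt hr
    field_simp
    ring
  · have e1 : Real.sqrt ((1 - 1) ^ 2 + 4 * 1 ^ 2) = 2 := by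
      norm_num
    have e2 : Real.sqrt (4 + (1 - 1) ^ 2) = 2 := by
      norm_num
    have e3 : Real.sqrt (1 + (1:ℝ) ^ 2) = Real.sqrt 2 := by norm_num
    unfold povmBound pvmBound
    rw [e1, e2, e3]
    have hr1 : (1:ℝ) ≤ Real.sqrt 2 := sq_le_imp (by norm_num) (le_of_lt hr) (by nlinarith)
    have m1 : max (1 / 2 + (1 - 1) / (2 * Real.sqrt 2)) (1 / 2 + (2:ℝ) / 8)
        ≤ 1 / 2 + Real.sqrt 2 / 4 := by
      apply max_le
      · rw [show (1:ℝ) - 1 = 0 by norm_num, zero_div, add_zero]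
        nlinarith [Real.sqrt_nonneg 2]
      · linarith
    rw [max_eq_right m1]
    have hne : Real.sqrt 2 ≠ 0 := ne_of_gt hr
    field_simp
    nlinarith [hr2]
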